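/- Wood's reduction correctness: Let G = (V,E) be a simple graph and K ≥ 2 with |E| ≥ C(K,2). Construct the interdiction network with source s, node set A₁ = E, node set A₂ = V, sink t, arcs s→e (capacity 2) for each e ∈ A₁, arcs e→u and e→v (capacity 1) for each edge e = {u,v}, and arcs v→t (capacity 1) for each v ∈ A₂. Then removing R = |E| − C(K,2) nodes from A₁ can reduce the maximum s-t flow to exactly K if and only if G contains a clique on K vertices. -/
import Mathlib


open Finset

/-- A feasible `s`-`t` flow on a finite directed network with capacities `cap`. -/
structure NetworkFlow {N : Type*} [Fintype N] [DecidableEq N]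
    (cap : N → N → ℝ) (s t : N) where
  f : N → N → ℝ
  nonneg : ∀ u v, 0 ≤ f u v
  capacity : ∀ u v, f u v ≤ cap u v
  conservation : ∀ v, v ≠ s → v ≠ t → (∑ u, f u v) = (∑ u, f v u)

/-- The value of a flow: net outflow at the source. -/
def NetworkFlow.value {N : Type*} [Fintype N] [DecidableEq N]
    {cap : N → N → ℝ} {s t : N} (F : NetworkFlow cap s t) : ℝ :=
  (∑ v, F.f s v) - (∑ v, F.f v s)

/-- `M` is the maximum flow value of the network. -/
def IsMaxFlowValue {N : Type*} [Fintype N] [DecidableEq N]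
    (cap : N → N → ℝ) (s t : N) (M : ℝ) : Prop :=
  IsGreatest {v : ℝ | ∃ F : NetworkFlow cap s t, F.value = v} M

/-- Node set of Wood's reduction network: source, edge-layer `A₁`, vertex-layer `A₂`, sink. -/
abbrev WoodNode (V : Type*) := Unit ⊕ Sym2 V ⊕ V ⊕ Unit

/-- Capacities of Wood's reduction network after interdicting the edge-node set `D`:
`s → e` capacity 2 for surviving `e ∈ E \ D`, `e → v` capacity 1 when `v ∈ e` survives,
`v → t` capacity 1; all other capacities 0. -/
def woodCap {V : Type*} [Fintype V] [DecidableEq V] (G : SimpleGraph V)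
    [DecidableRel G.Adj] (D : Finset (Sym2 V)) : WoodNode V → WoodNode V → ℝ
  | Sum.inl _, Sum.inr (Sum.inl e) => if e ∈ G.edgeFinset \ D then 2 else 0
  | Sum.inr (Sum.inl e), Sum.inr (Sum.inr (Sum.inl v)) =>
      if e ∈ G.edgeFinset \ D ∧ v ∈ e then 1 else 0
  | Sum.inr (Sum.inr (Sum.inl _)), Sum.inr (Sum.inr (Sum.inr _)) => 1
  | _, _ => 0

/-- The source node. -/
def woodSource (V : Type*) : WoodNode V := Sum.inl ()

/-- The sink node. -/
def woodSink (V : Type*) : WoodNode V := Sum.inr (Sum.inr (Sum.inr ()))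

theorem NetworkFlow.value_eq_sink {N : Type*} [Fintype N] [DecidableEq N]
    {cap : N → N → ℝ} {s t : N} (hst : s ≠ t) (F : NetworkFlow cap s t) :
    F.value = (∑ u, F.f u t) - (∑ u, F.f t u) := by
  classical
  set g : N → ℝ := fun v => (∑ u, F.f u v) - (∑ u, F.f v u) with hg
  have h0 : ∑ v, g v = 0 := by
    simp only [hg, Finset.sum_sub_distrib]
    rw [Finset.sum_comm]
    ring
  have hsub : ({s, t} : Finset N) ⊆ univ := subset_univ _
  have hz : ∀ v ∈ (univ : Finset N), v ∉ ({s, t} : Finset N) → g v = 0 := by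
    intro v _ hv
    simp only [mem_insert, mem_singleton, not_or] at hv
    simp [hg, F.conservation v hv.1 hv.2]
  have h1 : ∑ v ∈ ({s, t} : Finset N), g v = 0 := by
    rw [Finset.sum_subset hsub hz]; exact h0
  rw [Finset.sum_pair hst] at h1
  have : g s = -(g t) := by linarith
  have hval : F.value = -(g s) := by simp only [NetworkFlow.value, hg]; ring
  rw [hval, this]; simp [hg]

section Wood
variable {V : Type*} [Fintype V] [DecidableEq V] (G : SimpleGraph V) [DecidableRel G.Adj]
  (D : Finset (Sym2 V))

/-- Vertices covered by a surviving edge. -/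
def woodCovered : Finset V := univ.filter (fun v => ∃ e ∈ G.edgeFinset \ D, v ∈ e)

lemma mem_woodCovered {v : V} :
    v ∈ woodCovered G D ↔ ∃ e ∈ G.edgeFinset \ D, v ∈ e := by
  simp [woodCovered]

lemma woodCap_nonneg (u w : WoodNode V) : 0 ≤ woodCap G D u w := by
  rcases u with u | u | u | u <;> rcases w with w | w | w | w <;>
    simp only [woodCap] <;> try positivity

lemma woodCap_sink_left (u : WoodNode V) : woodCap G D (woodSink V) u = 0 := by
  rcases u with u | u | u | u <;> rfl

/-- selection of a covering edge -/
noncomputable def woodSel (v : V) : Sym2 V :=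
  if h : ∃ e ∈ G.edgeFinset \ D, v ∈ e then h.choose else Sym2.diag v

lemma woodSel_spec {v : V} (h : v ∈ woodCovered G D) :
    woodSel G D v ∈ G.edgeFinset \ D ∧ v ∈ woodSel G D v := by
  rw [mem_woodCovered] at h
  rw [woodSel, dif_pos h]
  exact ⟨h.choose_spec.1, h.choose_spec.2⟩

noncomputable def woodFlow : WoodNode V → WoodNode V → ℝ
  | Sum.inl _, Sum.inr (Sum.inl e) =>
      (((woodCovered G D).filter (fun v => woodSel G D v = e)).card : ℝ)
  | Sum.inr (Sum.inl e), Sum.inr (Sum.inr (Sum.inl v)) =>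
      if v ∈ woodCovered G D ∧ woodSel G D v = e then 1 else 0
  | Sum.inr (Sum.inr (Sum.inl v)), Sum.inr (Sum.inr (Sum.inr _)) =>
      if v ∈ woodCovered G D then 1 else 0
  | _, _ => 0

end Wood

section Wood2
variable {V : Type*} [Fintype V] [DecidableEq V] (G : SimpleGraph V) [DecidableRel G.Adj]
  (D : Finset (Sym2 V))

lemma woodFlow_capacity (u w : WoodNode V) : woodFlow G D u w ≤ woodCap G D u w := by
  rcases u with u | u | u | u <;> rcases w with w | w | w | w <;>
      simp only [woodFlow, woodCap] <;> try exact le_rfl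
  · -- source to edge node
    by_cases hw : w ∈ G.edgeFinset \ D
    · rw [if_pos hw]
      induction w using Sym2.ind with
      | _ a b =>
        have hsub : (woodCovered G D).filter (fun v => woodSel G D v = s(a, b)) ⊆
            ({a, b} : Finset V) := by
          intro v hv
          simp only [mem_filter] at hv
          have hmem : v ∈ s(a, b) := hv.2 ▸ (woodSel_spec G D hv.1).2
          rw [Sym2.mem_iff] at hmem
          simp only [mem_insert, mem_singleton]
          exact hmem
        have h2 : ((woodCovered G D).filter (fun v => woodSel G D v = s(a, b))).card ≤ 2 :=
          le_trans (Finset.card_le_card hsub)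
            (le_trans (Finset.card_insert_le _ _) (by simp))
        exact_mod_cast h2
    · rw [if_neg hw]
      have : (woodCovered G D).filter (fun v => woodSel G D v = w) = ∅ := by
        rw [Finset.filter_eq_empty_iff]
        intro v hv heq
        exact hw (heq ▸ (woodSel_spec G D hv).1)
      simp [this]
  · -- edge node to vertex node
    split_ifs with h1 h2
    · exact le_refl 1
    · obtain ⟨hs1, hs2⟩ := woodSel_spec G D h1.1
      rw [h1.2] at hs1 hs2
      exact absurd ⟨hs1, hs2⟩ h2
    · norm_num
    · exact le_rfl
  · -- vertex node to sink
    split_ifs <;> norm_num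

lemma woodFlow_nonneg (u w : WoodNode V) : 0 ≤ woodFlow G D u w := by
  rcases u with u | u | u | u <;> rcases w with w | w | w | w <;>
    simp only [woodFlow] <;> first | positivity | (split_ifs <;> norm_num)

lemma filter_univ_and (C : Finset V) (p : V → Prop) [DecidablePred p]
    [DecidableEq V] :
    univ.filter (fun v => v ∈ C ∧ p v) = C.filter p := by
  ext v; simp

lemma woodFlow_conservation (v : WoodNode V) (hs : v ≠ woodSource V)
    (ht : v ≠ woodSink V) :
    (∑ u, woodFlow G D u v) = (∑ u, woodFlow G D v u) := by
  rcases v with v | v | v | v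
  · exact absurd rfl hs
  · -- edge node
    have hin : (∑ u, woodFlow G D u (Sum.inr (Sum.inl v))) =
        (((woodCovered G D).filter (fun x => woodSel G D x = v)).card : ℝ) := by
      simp [Fintype.sum_sum_type, woodFlow]
    have hout : (∑ u, woodFlow G D (Sum.inr (Sum.inl v)) u) =
        (((woodCovered G D).filter (fun x => woodSel G D x = v)).card : ℝ) := by
      simp only [Fintype.sum_sum_type, woodFlow]
      rw [Finset.sum_boole, filter_univ_and]
      simp
    rw [hin, hout]
  · -- vertex node
    have hin : (∑ u, woodFlow G D u (Sum.inr (Sum.inr (Sum.inl v)))) =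
        (if v ∈ woodCovered G D then 1 else 0 : ℝ) := by
      simp only [Fintype.sum_sum_type, woodFlow]
      by_cases hv : v ∈ woodCovered G D <;>
        simp [hv, Finset.sum_ite_eq, Finset.sum_ite_eq']
    have hout : (∑ u, woodFlow G D (Sum.inr (Sum.inr (Sum.inl v))) u) =
        (if v ∈ woodCovered G D then 1 else 0 : ℝ) := by
      simp [Fintype.sum_sum_type, woodFlow]
    rw [hin, hout]
  · exact absurd rfl ht

noncomputable def woodNetworkFlow :
    NetworkFlow (woodCap G D) (woodSource V) (woodSink V) where
  f := woodFlow G D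
  nonneg := woodFlow_nonneg G D
  capacity := woodFlow_capacity G D
  conservation := woodFlow_conservation G D

lemma woodNetworkFlow_value :
    (woodNetworkFlow G D).value = ((woodCovered G D).card : ℝ) := by
  have h1 : (∑ w, woodFlow G D w (woodSource V)) = 0 := by
    simp [Fintype.sum_sum_type, woodFlow, woodSource]
  have h2 : (∑ w, woodFlow G D (woodSource V) w) = ((woodCovered G D).card : ℝ) := by
    simp only [Fintype.sum_sum_type, woodFlow, woodSource]
    have := Finset.card_eq_sum_card_fiberwise
      (f := woodSel G D) (s := woodCovered G D) (t := univ) (fun x _ => mem_univ _)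
    simp only [this]
    push_cast
    simp
  simp only [NetworkFlow.value, woodNetworkFlow, h1, h2, sub_zero]

lemma wood_flow_le (F : NetworkFlow (woodCap G D) (woodSource V) (woodSink V)) :
    F.value ≤ ((woodCovered G D).card : ℝ) := by
  have hst : woodSource V ≠ woodSink V := by simp [woodSource, woodSink]
  -- flow out of the sink is zero
  have hsink : ∀ u, F.f (woodSink V) u = 0 := fun u =>
    le_antisymm (le_trans (F.capacity _ u) (le_of_eq (woodCap_sink_left G D u)))
      (F.nonneg _ u)
  rw [F.value_eq_sink hst]
  have h2 : (∑ u, F.f (woodSink V) u) = 0 := Finset.sum_eq_zero fun u _ => hsink u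
  rw [h2, sub_zero]
  -- flow into an uncovered vertex node is zero, hence out of it as well
  have huncov : ∀ v : V, v ∉ woodCovered G D →
      F.f (Sum.inr (Sum.inr (Sum.inl v))) (woodSink V) = 0 := by
    intro v hv
    have hcap0 : ∀ u, woodCap G D u (Sum.inr (Sum.inr (Sum.inl v))) = 0 := by
      intro u
      rcases u with u | u | u | u
      · rfl
      · simp only [woodCap]
        rw [if_neg]
        intro ⟨h1, h2⟩
        exact hv ((mem_woodCovered G D).2 ⟨u, h1, h2⟩)
      · rfl
      · rfl
    have hin : (∑ u, F.f u (Sum.inr (Sum.inr (Sum.inl v)))) = 0 :=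
      Finset.sum_eq_zero fun u _ => le_antisymm
        (le_trans (F.capacity _ _) (le_of_eq (hcap0 u))) (F.nonneg _ _)
    have hcons := F.conservation (Sum.inr (Sum.inr (Sum.inl v)))
      (by simp [woodSource]) (by simp [woodSink])
    have hout : (∑ u, F.f (Sum.inr (Sum.inr (Sum.inl v))) u) = 0 := by
      rw [← hcons, hin]
    have := (Finset.sum_eq_zero_iff_of_nonneg
      (fun u _ => F.nonneg (Sum.inr (Sum.inr (Sum.inl v))) u)).1 hout
    exact this (woodSink V) (mem_univ _)
  -- bound the flow into the sink
  calc (∑ u, F.f u (woodSink V))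
      ≤ ∑ v : V, (if v ∈ woodCovered G D then (1 : ℝ) else 0) := by
        rw [Fintype.sum_sum_type, Fintype.sum_sum_type, Fintype.sum_sum_type]
        have z1 : (∑ u : Unit, F.f (Sum.inl u) (woodSink V)) = 0 := by
          refine Finset.sum_eq_zero fun u _ => le_antisymm ?_ (F.nonneg _ _)
          exact le_trans (F.capacity _ _) (le_of_eq rfl)
        have z2 : (∑ e : Sym2 V, F.f (Sum.inr (Sum.inl e)) (woodSink V)) = 0 := by
          refine Finset.sum_eq_zero fun e _ => le_antisymm ?_ (F.nonneg _ _)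
          exact le_trans (F.capacity _ _) (le_of_eq rfl)
        have z3 : (∑ u : Unit, F.f (Sum.inr (Sum.inr (Sum.inr u))) (woodSink V)) = 0 := by
          refine Finset.sum_eq_zero fun u _ => le_antisymm ?_ (F.nonneg _ _)
          exact le_trans (F.capacity _ _) (le_of_eq rfl)
        rw [z1, z2, z3, zero_add, zero_add, add_zero]
        apply Finset.sum_le_sum
        intro v _
        by_cases hv : v ∈ woodCovered G D
        · rw [if_pos hv]
          exact le_trans (F.capacity _ _) (le_of_eq rfl)
        · rw [if_neg hv, huncov v hv]
    _ = ((woodCovered G D).card : ℝ) := by simp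

theorem wood_maxflow :
    IsMaxFlowValue (woodCap G D) (woodSource V) (woodSink V)
      ((woodCovered G D).card : ℝ) := by
  constructor
  · exact ⟨woodNetworkFlow G D, woodNetworkFlow_value G D⟩
  · rintro x ⟨F, rfl⟩
    exact wood_flow_le G D F

lemma card_sym2_offdiag (C : Finset V) :
    (C.sym2.filter (fun e => ¬ e.IsDiag)).card = C.card.choose 2 := by
  have hdiag : C.sym2.filter (fun e => e.IsDiag) = C.image Sym2.diag := by
    ext e
    induction e using Sym2.ind with
    | _ a b =>
      simp only [mem_filter, Finset.mk_mem_sym2_iff, Sym2.mk_isDiag_iff, mem_image]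
      constructor
      · rintro ⟨⟨ha, _⟩, rfl⟩
        exact ⟨a, ha, rfl⟩
      · rintro ⟨c, hc, h⟩
        have h' : s(c, c) = s(a, b) := h
        rw [Sym2.eq_iff] at h'
        rcases h' with ⟨rfl, rfl⟩ | ⟨rfl, rfl⟩ <;> exact ⟨⟨hc, hc⟩, rfl⟩
  have hcard1 : (C.sym2.filter (fun e => e.IsDiag)).card = C.card := by
    rw [hdiag, Finset.card_image_of_injective _ Sym2.diag_injective]
  have hsplit := Finset.card_filter_add_card_filter_not
    (s := C.sym2) (p := fun e => e.IsDiag)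
  rw [Finset.card_sym2] at hsplit
  have hchoose : (C.card + 1).choose 2 = C.card + C.card.choose 2 := by
    rw [Nat.choose_succ_succ, Nat.choose_one_right]
  omega

lemma card_sym2_offdiag' (C : Finset V) :
    ({e ∈ C.sym2 | ¬ e.IsDiag} : Finset (Sym2 V)).card = C.card.choose 2 :=
  card_sym2_offdiag C

end Wood2

/-- Wood's reduction correctness: removing `R = |E| - C(K,2)` nodes of the
edge-layer `A₁` can reduce the maximum `s`-`t` flow of the reduction network to exactly
`K` iff `G` contains a clique on `K` vertices. -/
theorem wood_reduction_correct {V : Type*} [Fintype V] [DecidableEq V]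
    (G : SimpleGraph V) [DecidableRel G.Adj] (K : ℕ) (hK : 2 ≤ K)
    (hE : K.choose 2 ≤ G.edgeFinset.card) :
    (∃ D ⊆ G.edgeFinset, D.card = G.edgeFinset.card - K.choose 2 ∧
        IsMaxFlowValue (woodCap G D) (woodSource V) (woodSink V) (K : ℝ)) ↔
      (∃ S : Finset V, G.IsNClique K S) := by
  constructor
  · rintro ⟨D, hDsub, hDcard, hmax⟩
    have huniq : (K : ℝ) = ((woodCovered G D).card : ℝ) :=
      IsGreatest.unique hmax (wood_maxflow G D)
    have hKcard : (woodCovered G D).card = K := by exact_mod_cast huniq.symm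
    set C := woodCovered G D with hC
    have hsurv : (G.edgeFinset \ D).card = K.choose 2 := by
      rw [Finset.card_sdiff_of_subset hDsub, hDcard, Nat.sub_sub_self hE]
    have hsub : G.edgeFinset \ D ⊆ C.sym2.filter (fun e => ¬ e.IsDiag) := by
      intro e he
      have hedge : e ∈ G.edgeFinset := (Finset.mem_sdiff.1 he).1
      refine mem_filter.2 ⟨Finset.mem_sym2_iff.2 fun a ha => ?_, ?_⟩
      · exact (mem_woodCovered G D).2 ⟨e, he, ha⟩
      · exact G.not_isDiag_of_mem_edgeSet (SimpleGraph.mem_edgeFinset.1 hedge)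
    have heq : G.edgeFinset \ D = C.sym2.filter (fun e => ¬ e.IsDiag) := by
      apply Finset.eq_of_subset_of_card_le hsub
      rw [card_sym2_offdiag, hKcard, hsurv]
    refine ⟨C, ?_, hKcard⟩
    intro a ha b hb hab
    have hmem : s(a, b) ∈ C.sym2.filter (fun e => ¬ e.IsDiag) := by
      refine mem_filter.2 ⟨Finset.mk_mem_sym2_iff.2 ⟨Finset.mem_coe.1 ha,
        Finset.mem_coe.1 hb⟩, ?_⟩
      simpa [Sym2.mk_isDiag_iff] using hab
    rw [← heq] at hmem
    have hmem2 := (Finset.mem_sdiff.1 hmem).1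
    rw [SimpleGraph.mem_edgeFinset, SimpleGraph.mem_edgeSet] at hmem2
    exact hmem2
  · rintro ⟨S, hSclique, hScard⟩
    set T := S.sym2.filter (fun e => ¬ e.IsDiag) with hT
    have hTsub : T ⊆ G.edgeFinset := by
      intro e he
      induction e using Sym2.ind with
      | _ a b =>
        rw [hT, mem_filter, Finset.mk_mem_sym2_iff] at he
        obtain ⟨⟨ha, hb⟩, hd⟩ := he
        rw [Sym2.mk_isDiag_iff] at hd
        rw [SimpleGraph.mem_edgeFinset, SimpleGraph.mem_edgeSet]
        exact hSclique (Finset.mem_coe.2 ha) (Finset.mem_coe.2 hb) hd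
    have hTcard : T.card = K.choose 2 := by
      rw [hT, card_sym2_offdiag, hScard]
    refine ⟨G.edgeFinset \ T, Finset.sdiff_subset, ?_, ?_⟩
    · rw [Finset.card_sdiff_of_subset hTsub, hTcard]
    · have hED : G.edgeFinset \ (G.edgeFinset \ T) = T := by
        exact Finset.sdiff_sdiff_eq_self hTsub
      have hcov : woodCovered G (G.edgeFinset \ T) = S := by
        ext v
        rw [mem_woodCovered]
        simp only [hED]
        constructor
        · rintro ⟨e, heT, hv⟩
          exact Finset.mem_sym2_iff.1 (mem_filter.1 heT).1 v hv
        · intro hv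
          obtain ⟨w, hw, hwv⟩ := Finset.exists_mem_ne
            (by omega : 1 < S.card) v
          refine ⟨s(v, w), ?_, Sym2.mem_mk_left v w⟩
          refine mem_filter.2 ⟨Finset.mk_mem_sym2_iff.2 ⟨hv, hw⟩, ?_⟩
          rw [Sym2.mk_isDiag_iff]
          exact fun h => hwv h.symm
      have hmf := wood_maxflow G (G.edgeFinset \ T)
      rw [hcov, hScard] at hmf
      exact hmf
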